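/- Fix integers n, m ≥ 1, an obfuscating set W, an obfuscating function 𝔬, a probability distribution F on pairs (G₁,G₂) of graphs on V₁ and V₂ with core vertices C that is supported on pairs of asymmetric graphs, and a vertex of interest v* ∈ C. Then there exists a vertex nomination scheme Ψ such that for every vertex nomination scheme Φ, every h ∈ {1,…,m}, and every pair (g₁,g₂) such that the event {G₁ = g₁ and G₂ isomorphic to g₂} has positive probability, P( rank_{Ψ(G₁,𝔬(G₂),v*)}(𝔬(v*)) ≤ h | G₁ = g₁, G₂ ≅ g₂ ) ≥ P( rank_{Φ(G₁,𝔬(G₂),v*)}(𝔬(v*)) ≤ h | G₁ = g₁, G₂ ≅ g₂ ); that is, conditionally on each isomorphism class, the rank distribution of the true vertex under Ψ majorizes that under any other scheme. -/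

import Mathlib

open Filter MeasureTheory
open scoped ENNReal

namespace VN

/-- `w` lies in the automorphism orbit `I(u;g)` of `u` in the graph `g`. -/
def InOrbit {V : Type*} (g : SimpleGraph V) (u w : V) : Prop :=
  ∃ σ : SimpleGraph.Iso g g, σ u = w

/-- A graph is asymmetric if its only automorphism is the identity. -/
def IsAsym {V : Type*} (g : SimpleGraph V) : Prop :=
  ∀ σ : SimpleGraph.Iso g g, ∀ v, σ v = v

/-- The obfuscated graph `𝔬(g₂)`: relabel the vertices of `g₂` along the bijection `o`. -/
def obf {m : ℕ} {W : Type*} (o : Fin m ≃ W) (g : SimpleGraph (Fin m)) : SimpleGraph W :=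
  SimpleGraph.map o.toEmbedding g

/-- The (1-indexed) rank of `w` in the total ordering of `W` encoded by `T : W ≃ Fin m`. -/
def vnRank {m : ℕ} {W : Type*} (T : W ≃ Fin m) (w : W) : ℕ := (T w).val + 1

/-- A vertex nomination scheme: to each graph `g₁` on `V₁ = Fin n`, obfuscated graph on `W`,
and vertex of interest in `V₁`, it assigns a total ordering of `W` (encoded as `W ≃ Fin m`),
subject to the consistency property: the set of ranks assigned to the image of each
automorphism orbit of `g₂` does not depend on the obfuscating function used. -/
structure VNScheme (n m : ℕ) (W : Type*) where
  toFun : SimpleGraph (Fin n) → SimpleGraph W → Fin n → (W ≃ Fin m)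
  consistent : ∀ (g₁ : SimpleGraph (Fin n)) (g₂ : SimpleGraph (Fin m))
      (v : Fin n) (o₁ o₂ : Fin m ≃ W) (u : Fin m),
      {r : ℕ | ∃ w, InOrbit g₂ u w ∧ vnRank (toFun g₁ (obf o₁ g₂) v) (o₁ w) = r} =
      {r : ℕ | ∃ w, InOrbit g₂ u w ∧ vnRank (toFun g₁ (obf o₂ g₂) v) (o₂ w) = r}

/-- The level-`k` error `L_k(Φ, v*)` of the scheme `Φ` at the vertex of interest `v` (whose
corresponding vertex in the second graph is `u`), with respect to the distribution `F` on
pairs of graphs and the obfuscating function `o`. -/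
noncomputable def vnError {n m : ℕ} {W : Type*}
    (F : PMF (SimpleGraph (Fin n) × SimpleGraph (Fin m)))
    (Φ : VNScheme n m W) (o : Fin m ≃ W) (v : Fin n) (u : Fin m) (k : ℕ) : ℝ :=
  (F.toOuterMeasure {p | k + 1 ≤ vnRank (Φ.toFun p.1 (obf o p.2) v) (o u)}).toReal

/-- The level-`k` Bayes error `L*_k(v*)`: the infimum of the level-`k` errors over all
vertex nomination schemes. -/
noncomputable def bayesError (n m : ℕ) (W : Type*)
    (F : PMF (SimpleGraph (Fin n) × SimpleGraph (Fin m)))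
    (o : Fin m ≃ W) (v : Fin n) (u : Fin m) (k : ℕ) : ℝ :=
  ⨅ Φ : VNScheme n m W, vnError F Φ o v u k

end VN

namespace VN

/-- The conditional probability `P(A ∣ E)` under a PMF `F`, as a ratio in `ℝ≥0∞`. -/
noncomputable def condProb {α : Type*} (F : PMF α) (A E : Set α) : ℝ≥0∞ :=
  F.toOuterMeasure (A ∩ E) / F.toOuterMeasure E

/-- The event `{G₁ = g₁ and G₂ isomorphic to g₂}`. -/
def isoEvent {n m : ℕ} (g₁ : SimpleGraph (Fin n)) (g₂ : SimpleGraph (Fin m)) :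
    Set (SimpleGraph (Fin n) × SimpleGraph (Fin m)) :=
  {p | p.1 = g₁ ∧ Nonempty (SimpleGraph.Iso p.2 g₂)}

end VN

namespace VNAux
open VN Finset

lemma map_iso_eq {α β : Type*} {g : SimpleGraph α} {g' : SimpleGraph β} (φ : g ≃g g') :
    SimpleGraph.map φ.toEquiv.toEmbedding g = g' := by
  ext a b
  simp only [SimpleGraph.map_adj, Equiv.toEmbedding_apply]
  constructor
  · rintro ⟨x, y, hxy, rfl, rfl⟩
    exact φ.map_adj_iff.mpr hxy
  · intro hab
    exact ⟨φ.symm a, φ.symm b, φ.symm.map_adj_iff.mpr hab, by simp, by simp⟩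

def ptd (m : ℕ) : Setoid (SimpleGraph (Fin m) × Fin m) where
  r x y := ∃ φ : x.1 ≃g y.1, φ x.2 = y.2
  iseqv := by
    refine ⟨fun x => ⟨SimpleGraph.Iso.refl, rfl⟩, ?_, ?_⟩
    · rintro x y ⟨φ, hφ⟩
      exact ⟨φ.symm, by rw [← hφ]; exact φ.symm_apply_apply x.2⟩
    · rintro x y z ⟨φ, hφ⟩ ⟨ψ, hψ⟩
      exact ⟨φ.trans ψ, by rw [← hψ, ← hφ]; rfl⟩

def Cls (m : ℕ) := Quotient (ptd m)

noncomputable instance (m : ℕ) : LinearOrder (Cls m) := IsWellOrder.linearOrder WellOrderingRel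

def cls {m : ℕ} (g : SimpleGraph (Fin m)) (i : Fin m) : Cls m := Quotient.mk (ptd m) (g, i)

lemma cls_eq_iff {m : ℕ} {g g' : SimpleGraph (Fin m)} {i i' : Fin m} :
    cls g i = cls g' i' ↔ ∃ φ : g ≃g g', φ i = i' :=
  ⟨fun h => Quotient.exact h, fun h => Quotient.sound h⟩

lemma cls_iso {m : ℕ} {g g' : SimpleGraph (Fin m)} (ε : g ≃g g') (i : Fin m) :
    cls g' (ε i) = cls g i :=
  (cls_eq_iff.mpr ⟨ε, rfl⟩).symm

noncomputable def Qc {n m : ℕ} (F : PMF (SimpleGraph (Fin n) × SimpleGraph (Fin m)))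
    (u : Fin m) (g₁ : SimpleGraph (Fin n)) (k : Cls m) : ℝ≥0∞ :=
  F.toOuterMeasure {p | p.1 = g₁ ∧ cls p.2 u = k}

noncomputable def key {n m : ℕ} (F : PMF (SimpleGraph (Fin n) × SimpleGraph (Fin m)))
    (u : Fin m) (g₁ : SimpleGraph (Fin n)) (g : SimpleGraph (Fin m)) (i : Fin m) :
    ℝ≥0∞ᵒᵈ ×ₗ Cls m :=
  toLex (OrderDual.toDual (Qc F u g₁ (cls g i)), cls g i)

lemma key_eq_key_iff {n m : ℕ} {F : PMF (SimpleGraph (Fin n) × SimpleGraph (Fin m))}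
    {u : Fin m} {g₁ : SimpleGraph (Fin n)} {g g' : SimpleGraph (Fin m)} {i i' : Fin m} :
    key F u g₁ g i = key F u g₁ g' i' ↔ cls g i = cls g' i' := by
  constructor
  · intro h
    have := congrArg (fun x => (ofLex x).2) h
    simpa [key] using this
  · intro h
    simp only [key, h]

lemma key_iso {n m : ℕ} (F : PMF (SimpleGraph (Fin n) × SimpleGraph (Fin m)))
    (u : Fin m) (g₁ : SimpleGraph (Fin n)) {g g' : SimpleGraph (Fin m)}
    (ε : g ≃g g') (i : Fin m) :
    key F u g₁ g' (ε i) = key F u g₁ g i :=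
  key_eq_key_iff.mpr (cls_iso ε i)

noncomputable def ψT {n m : ℕ} {W : Type} (F : PMF (SimpleGraph (Fin n) × SimpleGraph (Fin m)))
    (u : Fin m) (o : Fin m ≃ W) (g₁ : SimpleGraph (Fin n)) (gW : SimpleGraph W) : W ≃ Fin m :=
  o.symm.trans (Tuple.sort (key F u g₁ (SimpleGraph.map o.symm.toEmbedding gW))).symm
open scoped Classical in
lemma card_filter_lt {a : ℕ} (ha : a ≤ m) :
    (Finset.univ.filter (fun j : Fin m => (j : ℕ) < a)).card = a := by
  have : Finset.univ.filter (fun j : Fin m => (j : ℕ) < a)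
      = Finset.univ.map (Fin.castLEEmb ha) := by
    ext j
    simp only [Finset.mem_filter, Finset.mem_univ, true_and, Finset.mem_map,
      Fin.castLEEmb, Fin.castLE]
    constructor
    · intro hj; exact ⟨⟨j, hj⟩, by simp⟩
    · rintro ⟨i, _, rfl⟩; exact i.isLt
  rw [this, Finset.card_map, Finset.card_univ, Fintype.card_fin]

open scoped Classical in
lemma downClosed_eq {s : Finset (Fin m)} (hs : ∀ x ∈ s, ∀ y : Fin m, y ≤ x → y ∈ s) :
    s = Finset.univ.filter (fun j : Fin m => (j : ℕ) < s.card) := by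
  have hcard : s.card ≤ m := by
    simpa using Finset.card_le_card (Finset.subset_univ s)
  have hsub : s ⊆ Finset.univ.filter (fun j : Fin m => (j : ℕ) < s.card) := by
    intro x hx
    simp only [mem_filter, mem_univ, true_and]
    have : Finset.Iic x ⊆ s := fun y hy => hs x hx y (Finset.mem_Iic.mp hy)
    have := Finset.card_le_card this
    rw [Fin.card_Iic] at this
    omega
  exact Finset.eq_of_subset_of_card_le hsub (by rw [card_filter_lt hcard])

open scoped Classical in
lemma rank_set_eq {K : Type*} [LinearOrder K] (f : Fin m → K) (k : K) :
    {r : ℕ | ∃ i, f i = k ∧ ((Tuple.sort f).symm i : ℕ) + 1 = r} =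
    {r : ℕ | (Finset.univ.filter (fun i => f i < k)).card < r ∧
        r ≤ (Finset.univ.filter (fun i => f i ≤ k)).card} := by
  set σ := Tuple.sort f with hσ
  have hmono : Monotone (f ∘ σ) := Tuple.monotone_sort f
  set a := (Finset.univ.filter (fun i => f i < k)).card with haa
  set b := (Finset.univ.filter (fun i => f i ≤ k)).card with hbb
  have hb_le : b ≤ m := le_trans (Finset.card_filter_le _ _) (by simp)
  have hcard_lt : (Finset.univ.filter (fun j : Fin m => f (σ j) < k)).card = a := by
    rw [haa]
    apply Finset.card_bij' (fun j _ => σ j) (fun i _ => σ.symm i) <;> simp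
  have hcard_le : (Finset.univ.filter (fun j : Fin m => f (σ j) ≤ k)).card = b := by
    rw [hbb]
    apply Finset.card_bij' (fun j _ => σ j) (fun i _ => σ.symm i) <;> simp
  have hlt : ∀ j : Fin m, f (σ j) < k ↔ (j : ℕ) < a := by
    have hdc := downClosed_eq (s := Finset.univ.filter (fun j : Fin m => f (σ j) < k))
      (by intro x hx y hy
          simp only [mem_filter, mem_univ, true_and] at hx ⊢
          exact lt_of_le_of_lt (hmono hy) hx)
    intro j
    constructor
    · intro h
      have : j ∈ Finset.univ.filter (fun j : Fin m => f (σ j) < k) := by simpa using h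
      rw [hdc] at this
      simpa [hcard_lt] using this
    · intro h
      have : j ∈ Finset.univ.filter (fun j : Fin m => f (σ j) < k) := by
        rw [hdc]; simpa [hcard_lt] using h
      simpa using this
  have hle : ∀ j : Fin m, f (σ j) ≤ k ↔ (j : ℕ) < b := by
    have hdc := downClosed_eq (s := Finset.univ.filter (fun j : Fin m => f (σ j) ≤ k))
      (by intro x hx y hy
          simp only [mem_filter, mem_univ, true_and] at hx ⊢
          exact le_trans (hmono hy) hx)
    intro j
    constructor
    · intro h
      have : j ∈ Finset.univ.filter (fun j : Fin m => f (σ j) ≤ k) := by simpa using h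
      rw [hdc] at this
      simpa [hcard_le] using this
    · intro h
      have : j ∈ Finset.univ.filter (fun j : Fin m => f (σ j) ≤ k) := by
        rw [hdc]; simpa [hcard_le] using h
      simpa using this
  have key : ∀ j : Fin m, f (σ j) = k ↔ (a ≤ (j : ℕ) ∧ (j : ℕ) < b) := by
    intro j
    constructor
    · intro h
      refine ⟨?_, (hle j).mp h.le⟩
      by_contra hc
      push_neg at hc
      exact absurd ((hlt j).mpr hc) (by simp [h])
    · rintro ⟨h1, h2⟩
      have hle' := (hle j).mpr h2
      have hnlt : ¬ f (σ j) < k := fun hc => by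
        have := (hlt j).mp hc; omega
      exact le_antisymm hle' (not_lt.mp hnlt)
  ext r
  simp only [Set.mem_setOf_eq]
  constructor
  · rintro ⟨i, hfi, hr⟩
    have : f (σ (σ.symm i)) = k := by simpa using hfi
    rcases (key _).mp this with ⟨h1, h2⟩
    omega
  · rintro ⟨h1, h2⟩
    have hr1 : 1 ≤ r := by omega
    have hrm : r - 1 < m := by omega
    refine ⟨σ ⟨r - 1, hrm⟩, ?_, ?_⟩
    · exact (key _).mpr (by simp; omega)
    · simp; omega


open scoped Classical in
lemma psi_rank_set {n m : ℕ} {W : Type} (F : PMF (SimpleGraph (Fin n) × SimpleGraph (Fin m)))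
    (u : Fin m) (o : Fin m ≃ W) (g₁ : SimpleGraph (Fin n)) (g₂ : SimpleGraph (Fin m))
    (oX : Fin m ≃ W) (uu : Fin m) :
    {r : ℕ | ∃ w, InOrbit g₂ uu w ∧ vnRank (ψT F u o g₁ (obf oX g₂)) (oX w) = r} =
    {r : ℕ | (Finset.univ.filter (fun i => key F u g₁ g₂ i < key F u g₁ g₂ uu)).card < r ∧
        r ≤ (Finset.univ.filter (fun i => key F u g₁ g₂ i ≤ key F u g₁ g₂ uu)).card} := by
  set e := oX.trans o.symm with he
  have hg : SimpleGraph.map o.symm.toEmbedding (obf oX g₂)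
      = SimpleGraph.map e.toEmbedding g₂ := by
    unfold obf
    rw [SimpleGraph.map_map, he, Equiv.trans_toEmbedding]; rfl
  set gp := SimpleGraph.map e.toEmbedding g₂ with hgp
  have keyp : ∀ w, key F u g₁ gp (e w) = key F u g₁ g₂ w := by
    intro w
    have h2 := key_iso F u g₁ (SimpleGraph.Iso.map e g₂) w
    rwa [SimpleGraph.Iso.map_apply] at h2
  set k := key F u g₁ g₂ uu with hk
  set σ := Tuple.sort (key F u g₁ gp) with hσ
  have hT : ∀ w : Fin m, vnRank (ψT F u o g₁ (obf oX g₂)) (oX w)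
      = ((σ.symm (e w) : Fin m) : ℕ) + 1 := by
    intro w
    simp only [ψT, vnRank, hg, Equiv.trans_apply]
    rfl
  have horbit : ∀ i : Fin m, key F u g₁ gp i = k ↔ ∃ w, InOrbit g₂ uu w ∧ e w = i := by
    intro i
    constructor
    · intro hkey
      have hcls : cls gp i = cls g₂ uu := key_eq_key_iff.mp hkey
      obtain ⟨φ, hφ⟩ := cls_eq_iff.mp hcls.symm
      refine ⟨e.symm i, ⟨φ.trans (SimpleGraph.Iso.map e g₂).symm, ?_⟩, by simp⟩
      show (SimpleGraph.Iso.map e g₂).symm (φ uu) = e.symm i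
      rw [hφ, SimpleGraph.Iso.map_symm_apply]
    · rintro ⟨w, ⟨β, hβ⟩, rfl⟩
      rw [keyp]
      apply key_eq_key_iff.mpr
      exact (cls_eq_iff.mpr ⟨β, hβ⟩).symm
  have hset : {r : ℕ | ∃ w, InOrbit g₂ uu w ∧ vnRank (ψT F u o g₁ (obf oX g₂)) (oX w) = r}
      = {r : ℕ | ∃ i, key F u g₁ gp i = k ∧ ((σ.symm i : Fin m) : ℕ) + 1 = r} := by
    ext r
    simp only [Set.mem_setOf_eq]
    constructor
    · rintro ⟨w, horb, hr⟩
      exact ⟨e w, (horbit (e w)).mpr ⟨w, horb, rfl⟩, by rw [← hT w]; exact hr⟩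
    · rintro ⟨i, hkey, hr⟩
      obtain ⟨w, horb, rfl⟩ := (horbit i).mp hkey
      exact ⟨w, horb, by rw [hT w]; exact hr⟩
  rw [hset, rank_set_eq (key F u g₁ gp) k]
  have hcard_lt : (Finset.univ.filter (fun i => key F u g₁ gp i < k)).card
      = (Finset.univ.filter (fun i => key F u g₁ g₂ i < k)).card := by
    apply Finset.card_bij' (fun i _ => e.symm i) (fun i _ => e i)
    · intro i hi
      simp only [Finset.mem_filter, Finset.mem_univ, true_and] at hi ⊢
      rw [← keyp (e.symm i), Equiv.apply_symm_apply]
      exact hi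
    · intro i hi
      simp only [Finset.mem_filter, Finset.mem_univ, true_and] at hi ⊢
      rw [keyp]
      exact hi
    · intro i _; simp
    · intro i _; simp
  have hcard_le : (Finset.univ.filter (fun i => key F u g₁ gp i ≤ k)).card
      = (Finset.univ.filter (fun i => key F u g₁ g₂ i ≤ k)).card := by
    apply Finset.card_bij' (fun i _ => e.symm i) (fun i _ => e i)
    · intro i hi
      simp only [Finset.mem_filter, Finset.mem_univ, true_and] at hi ⊢
      rw [← keyp (e.symm i), Equiv.apply_symm_apply]
      exact hi
    · intro i hi
      simp only [Finset.mem_filter, Finset.mem_univ, true_and] at hi ⊢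
      rw [keyp]
      exact hi
    · intro i _; simp
    · intro i _; simp
  rw [hcard_lt, hcard_le]

lemma asym_of_iso {α β : Type*} {p : SimpleGraph α} {q : SimpleGraph β}
    (hp : IsAsym p) (φ : p ≃g q) : IsAsym q := by
  intro σ x
  have h1 := hp (φ.trans (σ.trans φ.symm)) (φ.symm x)
  have h2 : φ.symm (σ (φ (φ.symm x))) = φ.symm x := h1
  rw [φ.apply_symm_apply] at h2
  have := congrArg φ h2
  rwa [φ.apply_symm_apply, φ.apply_symm_apply] at this

lemma orbit_singleton {V : Type*} {g : SimpleGraph V} (hg : IsAsym g) (w w' : V) :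
    InOrbit g w w' ↔ w' = w := by
  constructor
  · rintro ⟨σ, hσ⟩
    rw [← hσ, hg σ w]
  · rintro rfl
    exact ⟨SimpleGraph.Iso.refl, rfl⟩

section Scheme

lemma scheme_equivariant {n m : ℕ} {W : Type} (o : Fin m ≃ W) (Φ : VNScheme n m W)
    (g₁ : SimpleGraph (Fin n)) (v : Fin n) {p₂ q₂ : SimpleGraph (Fin m)}
    (hp : IsAsym p₂) (φ : p₂ ≃g q₂) (w : Fin m) :
    vnRank (Φ.toFun g₁ (obf o q₂) v) (o (φ w)) = vnRank (Φ.toFun g₁ (obf o p₂) v) (o w) := by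
  have hobf : obf (φ.toEquiv.trans o) p₂ = obf o q₂ := by
    unfold obf
    rw [Equiv.trans_toEmbedding]
    show SimpleGraph.map (⇑o.toEmbedding ∘ ⇑φ.toEquiv.toEmbedding) p₂ = _
    rw [← SimpleGraph.map_map, map_iso_eq φ]
  have hcons := Φ.consistent g₁ p₂ v o (φ.toEquiv.trans o) w
  have hs1 : {r : ℕ | ∃ w', InOrbit p₂ w w' ∧ vnRank (Φ.toFun g₁ (obf o p₂) v) (o w') = r}
      = {vnRank (Φ.toFun g₁ (obf o p₂) v) (o w)} := by
    ext r
    simp only [Set.mem_setOf_eq, Set.mem_singleton_iff]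
    constructor
    · rintro ⟨w', hw', rfl⟩
      rw [(orbit_singleton hp w w').mp hw']
    · rintro rfl
      exact ⟨w, (orbit_singleton hp w w).mpr rfl, rfl⟩
  have hs2 : {r : ℕ | ∃ w', InOrbit p₂ w w' ∧
        vnRank (Φ.toFun g₁ (obf (φ.toEquiv.trans o) p₂) v) ((φ.toEquiv.trans o) w') = r}
      = {vnRank (Φ.toFun g₁ (obf (φ.toEquiv.trans o) p₂) v) ((φ.toEquiv.trans o) w)} := by
    ext r
    simp only [Set.mem_setOf_eq, Set.mem_singleton_iff]
    constructor
    · rintro ⟨w', hw', rfl⟩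
      rw [(orbit_singleton hp w w').mp hw']
    · rintro rfl
      exact ⟨w, (orbit_singleton hp w w).mpr rfl, rfl⟩
  rw [hs1, hs2] at hcons
  have := Set.singleton_eq_singleton_iff.mp hcons
  rw [hobf] at this
  exact this.symm

open scoped Classical in
lemma scheme_sum {n m : ℕ} {W : Type} (o : Fin m ≃ W)
    (F : PMF (SimpleGraph (Fin n) × SimpleGraph (Fin m)))
    (hF : ∀ p ∈ F.support, IsAsym p.1 ∧ IsAsym p.2)
    (Φ : VNScheme n m W) (v : Fin n) (u : Fin m) (h : ℕ)
    (g₁ : SimpleGraph (Fin n)) (g₂ : SimpleGraph (Fin m)) (hg₂ : IsAsym g₂) :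
    F.toOuterMeasure ({p | vnRank (Φ.toFun p.1 (obf o p.2) v) (o u) ≤ h} ∩ isoEvent g₁ g₂)
      = ∑ j ∈ Finset.univ.filter
          (fun j : Fin m => vnRank (Φ.toFun g₁ (obf o g₂) v) (o j) ≤ h),
          F.toOuterMeasure {p | p.1 = g₁ ∧ IsAsym p.2 ∧ ∃ ψ : p.2 ≃g g₂, ψ u = j} := by
  letI : MeasurableSpace (SimpleGraph (Fin n) × SimpleGraph (Fin m)) := ⊤
  set S := Finset.univ.filter
      (fun j : Fin m => vnRank (Φ.toFun g₁ (obf o g₂) v) (o j) ≤ h) with hS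
  set Ej : Fin m → Set (SimpleGraph (Fin n) × SimpleGraph (Fin m)) :=
      fun j => {p | p.1 = g₁ ∧ IsAsym p.2 ∧ ∃ ψ : p.2 ≃g g₂, ψ u = j} with hEj
  have hstep1 : F.toOuterMeasure
      ({p | vnRank (Φ.toFun p.1 (obf o p.2) v) (o u) ≤ h} ∩ isoEvent g₁ g₂)
      = F.toOuterMeasure (⋃ j ∈ S, Ej j) := by
    apply PMF.toOuterMeasure_apply_eq_of_inter_support_eq
    ext p
    simp only [Set.mem_inter_iff, Set.mem_setOf_eq]
    constructor
    · rintro ⟨⟨hA, hp1, ⟨ψ⟩⟩, hsupp⟩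
      have hasym := (hF p hsupp).2
      have hjS : ψ u ∈ S := by
        rw [hS, Finset.mem_filter]
        refine ⟨Finset.mem_univ _, ?_⟩
        have heq := scheme_equivariant o Φ g₁ v hasym ψ u
        rw [hp1] at hA
        rw [heq]
        exact hA
      exact ⟨Set.mem_biUnion hjS ⟨hp1, hasym, ψ, rfl⟩, hsupp⟩
    · rintro ⟨hU, hsupp⟩
      obtain ⟨j, hjS, hpEj⟩ := Set.mem_iUnion₂.mp hU
      obtain ⟨hp1, hasym, ψ, hψ⟩ := hpEj
      rw [hS, Finset.mem_filter] at hjS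
      replace hjS := hjS.2
      refine ⟨⟨?_, hp1, ⟨ψ⟩⟩, hsupp⟩
      have heq := scheme_equivariant o Φ g₁ v hasym ψ u
      rw [hψ] at heq
      rw [hp1, ← heq]
      exact hjS
  have hdisj : (↑S : Set (Fin m)).PairwiseDisjoint Ej := by
    intro j _ j' _ hne
    apply Set.disjoint_left.mpr
    rintro p ⟨hp1, hasym, ψ, hψ⟩ ⟨hp1', hasym', ψ', hψ'⟩
    apply hne
    have hα := hg₂ (ψ.symm.trans ψ') j
    have : ψ' (ψ.symm j) = j := hα
    rw [← hψ] at this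
    rw [ψ.symm_apply_apply] at this
    rw [← hψ, ← hψ', this]
  have hmeas : ∀ j ∈ S, MeasurableSet (Ej j) := fun _ _ => trivial
  have hstep2 : F.toOuterMeasure (⋃ j ∈ S, Ej j) = ∑ j ∈ S, F.toOuterMeasure (Ej j) := by
    rw [← PMF.toMeasure_apply_eq_toOuterMeasure_apply F (s := ⋃ j ∈ S, Ej j) trivial,
      measure_biUnion_finset hdisj hmeas]
    exact Finset.sum_congr rfl fun j _ =>
      PMF.toMeasure_apply_eq_toOuterMeasure_apply F (s := Ej j) trivial
  rw [hstep1, hstep2]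

end Scheme
lemma strictMono_coe_le {b : ℕ} (f : Fin b → Fin m) (hf : StrictMono f) :
    ∀ a : Fin b, (a : ℕ) ≤ (f a : ℕ) := by
  intro a
  induction' ha : (a : ℕ) with k ih generalizing a
  · exact Nat.zero_le _
  · have hk : k < b := by omega
    have hlt : (⟨k, hk⟩ : Fin b) < a := by
      rw [Fin.lt_def]; simp; omega
    have h2 := hf hlt
    have hk' := ih ⟨k, hk⟩ rfl
    rw [Fin.lt_def] at h2
    omega

open scoped Classical in
lemma antitone_sum_le {h : ℕ} (hm : h ≤ m) (G : Fin m → ℝ≥0∞) (hG : Antitone G)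
    (B : Finset (Fin m)) (hB : B.card ≤ h) :
    ∑ i ∈ B, G i ≤ ∑ i ∈ Finset.univ.filter (fun i : Fin m => (i : ℕ) < h), G i := by
  have hbm : B.card ≤ m := le_trans hB hm
  set e := B.orderEmbOfFin (rfl : B.card = B.card) with he
  have hrange : Set.range e = ↑B := B.range_orderEmbOfFin rfl
  have hBimage : B = Finset.univ.image e := by
    ext i
    simp only [Finset.mem_image, Finset.mem_univ, true_and]
    constructor
    · intro hi
      have : i ∈ Set.range e := by rw [hrange]; exact hi
      rcases this with ⟨a, ha⟩; exact ⟨a, ha⟩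
    · rintro ⟨a, rfl⟩
      exact B.orderEmbOfFin_mem rfl a
  have hsum1 : ∑ i ∈ B, G i = ∑ a : Fin B.card, G (e a) := by
    conv_lhs => rw [hBimage]
    rw [Finset.sum_image (fun a _ b _ hab => e.injective hab)]
  have hle1 : ∀ a : Fin B.card, G (e a) ≤ G (Fin.castLE hbm a) := by
    intro a
    apply hG
    rw [Fin.le_def]
    exact strictMono_coe_le e e.strictMono a
  have hsum2 : ∑ a : Fin B.card, G (Fin.castLE hbm a)
      = ∑ i ∈ Finset.univ.image (Fin.castLE hbm), G i := by
    rw [Finset.sum_image (fun a _ b _ hab => Fin.castLE_injective hbm hab)]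
  calc ∑ i ∈ B, G i = ∑ a : Fin B.card, G (e a) := hsum1
    _ ≤ ∑ a : Fin B.card, G (Fin.castLE hbm a) := Finset.sum_le_sum (fun a _ => hle1 a)
    _ = ∑ i ∈ Finset.univ.image (Fin.castLE hbm), G i := hsum2
    _ ≤ ∑ i ∈ Finset.univ.filter (fun i : Fin m => (i : ℕ) < h), G i := by
        apply Finset.sum_le_sum_of_subset
        intro i hi
        simp only [Finset.mem_image, Finset.mem_univ, true_and] at hi
        rcases hi with ⟨a, rfl⟩
        simp only [Finset.mem_filter, Finset.mem_univ, true_and]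
        exact lt_of_lt_of_le a.isLt hB


open scoped Classical in
lemma opt {n m : ℕ} {W : Type} (o : Fin m ≃ W)
    (F : PMF (SimpleGraph (Fin n) × SimpleGraph (Fin m)))
    (hF : ∀ p ∈ F.support, IsAsym p.1 ∧ IsAsym p.2)
    (v : Fin n) (u : Fin m) (Ψ' Φ : VNScheme n m W)
    (hΨ : ∀ g₁ gW v', Ψ'.toFun g₁ gW v' = ψT F u o g₁ gW)
    (h : ℕ) (hmh : h ≤ m)
    (g₁ : SimpleGraph (Fin n)) (g₂ : SimpleGraph (Fin m))
    (hpos : 0 < F.toOuterMeasure (isoEvent g₁ g₂)) :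
    condProb F {p | vnRank (Φ.toFun p.1 (obf o p.2) v) (o u) ≤ h} (isoEvent g₁ g₂) ≤
    condProb F {p | vnRank (Ψ'.toFun p.1 (obf o p.2) v) (o u) ≤ h} (isoEvent g₁ g₂) := by
  have hne : F.toOuterMeasure (isoEvent g₁ g₂) ≠ 0 := ne_of_gt hpos
  obtain ⟨p0, hp0s, hp0E⟩ := Set.not_disjoint_iff.mp
    (fun hd => hne ((PMF.toOuterMeasure_apply_eq_zero_iff F (isoEvent g₁ g₂)).mpr hd))
  obtain ⟨hp01, ⟨φ0⟩⟩ := hp0E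
  have hg₂ : IsAsym g₂ := asym_of_iso (hF p0 hp0s).2 φ0
  unfold condProb
  apply ENNReal.div_le_div_right
  rw [scheme_sum o F hF Φ v u h g₁ g₂ hg₂, scheme_sum o F hF Ψ' v u h g₁ g₂ hg₂]
  set q : Fin m → ℝ≥0∞ :=
    fun j => F.toOuterMeasure {p | p.1 = g₁ ∧ IsAsym p.2 ∧ ∃ ψ : p.2 ≃g g₂, ψ u = j} with hqdef
  have hq : ∀ j, q j = Qc F u g₁ (cls g₂ j) := by
    intro j
    rw [hqdef]
    apply PMF.toOuterMeasure_apply_eq_of_inter_support_eq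
    ext p
    simp only [Set.mem_inter_iff, Set.mem_setOf_eq]
    constructor
    · rintro ⟨⟨hp1, hasym, ψ, hψ⟩, hsupp⟩
      exact ⟨⟨hp1, cls_eq_iff.mpr ⟨ψ, hψ⟩⟩, hsupp⟩
    · rintro ⟨⟨hp1, hcls⟩, hsupp⟩
      obtain ⟨ψ, hψ⟩ := cls_eq_iff.mp hcls
      exact ⟨⟨hp1, (hF p hsupp).2, ψ, hψ⟩, hsupp⟩
  set σ := Tuple.sort (key F u g₁ g₂) with hσ
  have hpull : SimpleGraph.map o.symm.toEmbedding (obf o g₂) = g₂ := by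
    unfold obf
    rw [SimpleGraph.map_map]
    simp only [Equiv.coe_toEmbedding, Equiv.symm_comp_self, SimpleGraph.map_id]
  have hψrank : ∀ j : Fin m,
      vnRank (ψT F u o g₁ (obf o g₂)) (o j) = ((σ.symm j : Fin m) : ℕ) + 1 := by
    intro j
    simp only [ψT, vnRank, hpull, Equiv.trans_apply, Equiv.symm_apply_apply, hσ]
  have hSΨ : Finset.univ.filter
        (fun j : Fin m => vnRank (Ψ'.toFun g₁ (obf o g₂) v) (o j) ≤ h)
      = Finset.univ.filter (fun j : Fin m => ((σ.symm j : Fin m) : ℕ) + 1 ≤ h) := by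
    apply Finset.filter_congr
    intro j _
    rw [hΨ, hψrank]
  set SΦ := Finset.univ.filter
      (fun j : Fin m => vnRank (Φ.toFun g₁ (obf o g₂) v) (o j) ≤ h) with hSΦ
  have hScard : SΦ.card ≤ h := by
    have hmaps : ∀ j ∈ SΦ, vnRank (Φ.toFun g₁ (obf o g₂) v) (o j) ∈ Finset.Icc 1 h := by
      intro j hj
      rw [hSΦ, Finset.mem_filter] at hj
      rw [Finset.mem_Icc]
      exact ⟨by simp [vnRank], hj.2⟩
    have hinj : Set.InjOn (fun j : Fin m => vnRank (Φ.toFun g₁ (obf o g₂) v) (o j)) ↑SΦ := by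
      intro a _ b _ hab
      simp only [vnRank] at hab
      have h2 : (Φ.toFun g₁ (obf o g₂) v) (o a) = (Φ.toFun g₁ (obf o g₂) v) (o b) :=
        Fin.val_injective (by omega)
      exact o.injective ((Φ.toFun g₁ (obf o g₂) v).injective h2)
    calc SΦ.card ≤ (Finset.Icc 1 h).card := Finset.card_le_card_of_injOn _ hmaps hinj
      _ = h := by rw [Nat.card_Icc]; omega
  set G : Fin m → ℝ≥0∞ := fun i => Qc F u g₁ (cls g₂ (σ i)) with hG
  have hGanti : Antitone G := by
    intro i i' hii'
    have hlex := Tuple.monotone_sort (key F u g₁ g₂) hii'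
    have hfst := Prod.Lex.monotone_fst _ _ hlex
    exact hfst
  set B := SΦ.image σ.symm with hB
  have hBcard : B.card ≤ h := by
    rw [hB, Finset.card_image_of_injective _ σ.symm.injective]
    exact hScard
  have hsum1 : ∑ j ∈ SΦ, q j = ∑ i ∈ B, G i := by
    rw [hB, Finset.sum_image (fun a _ b _ hab => σ.symm.injective hab)]
    refine Finset.sum_congr rfl fun j _ => ?_
    rw [hq j, hG]
    simp
  have himg : Finset.univ.filter (fun j : Fin m => ((σ.symm j : Fin m) : ℕ) + 1 ≤ h)
      = (Finset.univ.filter (fun i : Fin m => (i : ℕ) < h)).image σ := by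
    ext j
    simp only [Finset.mem_filter, Finset.mem_univ, true_and, Finset.mem_image]
    constructor
    · intro hj
      exact ⟨σ.symm j, by omega, by simp⟩
    · rintro ⟨i, hi, rfl⟩
      simp only [Equiv.symm_apply_apply]
      omega
  have hsum2 : ∑ j ∈ Finset.univ.filter (fun j : Fin m => ((σ.symm j : Fin m) : ℕ) + 1 ≤ h), q j
      = ∑ i ∈ Finset.univ.filter (fun i : Fin m => (i : ℕ) < h), G i := by
    rw [himg, Finset.sum_image (fun a _ b _ hab => σ.injective hab)]
    exact Finset.sum_congr rfl fun i _ => by rw [hq (σ i), hG]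
  rw [hSΨ]
  calc ∑ j ∈ SΦ, q j = ∑ i ∈ B, G i := hsum1
    _ ≤ ∑ i ∈ Finset.univ.filter (fun i : Fin m => (i : ℕ) < h), G i :=
        antitone_sum_le hmh G hGanti B hBcard
    _ = ∑ j ∈ Finset.univ.filter (fun j : Fin m => ((σ.symm j : Fin m) : ℕ) + 1 ≤ h), q j :=
        hsum2.symm

end VNAux


/-- For `F` supported on pairs of asymmetric graphs with core `C` and vertex of
interest `v* ∈ C`, there is a scheme `Ψ` such that conditionally on each event
`{G₁ = g₁, G₂ ≅ g₂}` of positive probability, the probability that the true corresponding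
vertex receives rank `≤ h` is at least that of any other scheme, for every `h ∈ {1,…,m}`. -/
theorem conditional_bayes_optimality
    {n m c : ℕ} (hn : 1 ≤ n) (hm : 1 ≤ m) (hcn : c ≤ n) (hcm : c ≤ m)
    {W : Type} (hW : Nonempty (Fin m ≃ W)) (o : Fin m ≃ W)
    (F : PMF (SimpleGraph (Fin n) × SimpleGraph (Fin m)))
    (hF : ∀ p ∈ F.support, VN.IsAsym p.1 ∧ VN.IsAsym p.2)
    (v : Fin n) (hv : (v : ℕ) < c) :
    ∃ Ψ : VN.VNScheme n m W,
      ∀ (Φ : VN.VNScheme n m W) (h : ℕ), 1 ≤ h → h ≤ m →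
        ∀ (g₁ : SimpleGraph (Fin n)) (g₂ : SimpleGraph (Fin m)),
          0 < F.toOuterMeasure (VN.isoEvent g₁ g₂) →
          VN.condProb F
              {p | VN.vnRank (Φ.toFun p.1 (VN.obf o p.2) v)
                  (o ⟨(v : ℕ), lt_of_lt_of_le hv hcm⟩) ≤ h}
              (VN.isoEvent g₁ g₂) ≤
            VN.condProb F
              {p | VN.vnRank (Ψ.toFun p.1 (VN.obf o p.2) v)
                  (o ⟨(v : ℕ), lt_of_lt_of_le hv hcm⟩) ≤ h}
              (VN.isoEvent g₁ g₂) := by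
  classical
  set u : Fin m := ⟨(v : ℕ), lt_of_lt_of_le hv hcm⟩ with hu
  refine ⟨⟨fun a b _ => VNAux.ψT F u o a b, fun g₁' g₂' v' o₁ o₂ uu => ?_⟩, ?_⟩
  · exact (VNAux.psi_rank_set F u o g₁' g₂' o₁ uu).trans
      (VNAux.psi_rank_set F u o g₁' g₂' o₂ uu).symm
  · exact fun Φ h h1 hmh g₁ g₂ hpos =>
      VNAux.opt o F hF v u _ Φ (fun _ _ _ => rfl) h hmh g₁ g₂ hpos
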